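/- arXiv:2409.01680 — 2 statements merged into one kernel-verified Lean document; each statement's English description precedes it below -/
import Mathlib

section
/- Let H = (V, E) be a hypergraph and let k be a positive integer. Then H is (AB)^(k−1)A-free if and only if the hypergraph H_{2k+1} is (AB)^k A-free, where H_{2k+1} is obtained from H by adding 2k+1 new vertices X = {x₁, …, x_{2k+1}} and taking edge set E ∪ {E ∪ {x} : E ∈ E, x ∈ X}. -/
/-- `π` is a linear ordering of the vertex set `Vs`: a duplicate-free list
consisting of exactly the elements of `Vs`. -/
def IsOrderingOf {α : Type*} (Vs : Set α) (π : List α) : Prop :=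
  π.Nodup ∧ ∀ v, v ∈ π ↔ v ∈ Vs

/-- The sets `A`, `B` form an alternating pattern of length `n` with respect to
the ordering `π`: there are `n` vertices occurring in this order in `π`, those
at even positions belonging to `A \ B` and those at odd positions to `B \ A`.
For `n = 2k` this is an `(AB)^k` pattern; for `n = 2k+1` it is an `(AB)^k A`
pattern (so `n = 4` gives `ABAB` and `n = 5` gives `ABABA`). -/
def FormPattern {α : Type*} (n : ℕ) (A B : Set α) (π : List α) : Prop :=
  ∃ w : List α, w.Sublist π ∧ w.length = n ∧
    ∀ (i : ℕ) (h : i < w.length),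
      (i % 2 = 0 → w[i]'h ∈ A \ B) ∧ (i % 2 = 1 → w[i]'h ∈ B \ A)

/-- `π` is a pattern-free ordering for the edge set `E`: no pair of edges forms
an alternating pattern of length `n` with respect to `π`. -/
def FreeOrdering {α : Type*} (n : ℕ) (E : Set (Set α)) (π : List α) : Prop :=
  ∀ A ∈ E, ∀ B ∈ E, ¬ FormPattern n A B π

/-- Two orderings are equivalent if one is obtained from the other by cyclic
shifts, or by reversing the order and then applying cyclic shifts. -/
def EquivOrderings {α : Type*} (π₁ π₂ : List α) : Prop :=
  (∃ m, π₂ = π₁.rotate m) ∨ (∃ m, π₂ = π₁.reverse.rotate m)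

/-- The hypergraph with vertex set `Vs` and edge set `E` admits an ordering of
its vertices that is free of alternating patterns of length `n`. -/
def HasFreeOrdering {α : Type*} (n : ℕ) (Vs : Set α) (E : Set (Set α)) : Prop :=
  ∃ π : List α, IsOrderingOf Vs π ∧ FreeOrdering n E π

/-- The edge set of the hypergraph `H_t`: the original edges, together with
each original edge extended by one of the `t` new vertices. -/
def ExtendedEdges {α : Type*} (t : ℕ) (E : Set (Set α)) : Set (Set (α ⊕ Fin t)) :=
  ((fun A => Sum.inl '' A) '' E) ∪
    {B | ∃ A ∈ E, ∃ x : Fin t, B = Sum.inl '' A ∪ {Sum.inr x}}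



/-- Double-insertion pigeonhole lemma, proved jointly with a single-insertion
front-or-double variant. -/
theorem gap_lemma_aux {γ : Type*} (p : γ → Bool) :
    ∀ (l : List γ) (w : List γ), w.Sublist l → (∀ x ∈ w, p x = false) →
      ((w.length + 1 ≤ l.countP p →
         (∃ b, p b = true ∧ (b :: w).Sublist l) ∨
         (∃ w₁ w₂ a b, w = w₁ ++ w₂ ∧ p a = true ∧ p b = true ∧
            (w₁ ++ a :: b :: w₂).Sublist l)) ∧
       (w.length + 2 ≤ l.countP p →
         ∃ w₁ w₂ a b, w = w₁ ++ w₂ ∧ p a = true ∧ p b = true ∧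
            (w₁ ++ a :: b :: w₂).Sublist l))
  | [] => by
      intro w hw _
      constructor <;> · intro h; rw [List.countP_nil] at h; omega
  | c :: t => by
      intro w hw hwp
      rw [List.sublist_cons_iff] at hw
      have hcount : (c :: t).countP p = t.countP p + (if p c then 1 else 0) := by
        rw [List.countP_cons]
      rcases hw with hw | ⟨r, rfl, hr⟩
      · rcases hc : p c with _ | _
        · -- p c = false
          have hct : (c :: t).countP p = t.countP p := by rw [hcount, hc]; simp
          obtain ⟨ih1, ih2⟩ := gap_lemma_aux p t w hw hwp
          constructor
          · intro h; rw [hct] at h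
            rcases ih1 h with ⟨b, hb, hsub⟩ | ⟨w₁, w₂, a, b, heq, ha, hb, hsub⟩
            · exact Or.inl ⟨b, hb, hsub.cons c⟩
            · exact Or.inr ⟨w₁, w₂, a, b, heq, ha, hb, hsub.cons c⟩
          · intro h; rw [hct] at h
            obtain ⟨w₁, w₂, a, b, heq, ha, hb, hsub⟩ := ih2 h
            exact ⟨w₁, w₂, a, b, heq, ha, hb, hsub.cons c⟩
        · -- p c = true
          have hct : (c :: t).countP p = t.countP p + 1 := by rw [hcount, hc]; simp
          obtain ⟨ih1, ih2⟩ := gap_lemma_aux p t w hw hwp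
          constructor
          · intro _; exact Or.inl ⟨c, hc, hw.cons₂ c⟩
          · intro h
            have h' : w.length + 1 ≤ t.countP p := by omega
            rcases ih1 h' with ⟨b, hb, hsub⟩ | ⟨w₁, w₂, a, b, heq, ha, hb, hsub⟩
            · exact ⟨[], w, c, b, rfl, hc, hb, hsub.cons₂ c⟩
            · exact ⟨w₁, w₂, a, b, heq, ha, hb, hsub.cons c⟩
      · -- w = c :: r
        have hc : p c = false := hwp c (by simp)
        have hct : (c :: t).countP p = t.countP p := by rw [hcount, hc]; simp
        have hrp : ∀ x ∈ r, p x = false := fun x hx => hwp x (by simp [hx])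
        obtain ⟨ih1, ih2⟩ := gap_lemma_aux p t r hr hrp
        constructor
        · intro h
          have h' : r.length + 2 ≤ t.countP p := by
            simp only [List.length_cons] at h; omega
          obtain ⟨w₁, w₂, a, b, heq, ha, hb, hsub⟩ := ih2 h'
          exact Or.inr ⟨c :: w₁, w₂, a, b, by simp [heq], ha, hb, hsub.cons₂ c⟩
        · intro h
          have h' : r.length + 2 ≤ t.countP p := by
            simp only [List.length_cons] at h; omega
          obtain ⟨w₁, w₂, a, b, heq, ha, hb, hsub⟩ := ih2 h'
          exact ⟨c :: w₁, w₂, a, b, by simp [heq], ha, hb, hsub.cons₂ c⟩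

theorem gap_lemma {γ : Type*} (p : γ → Bool) (l w : List γ) (hw : w.Sublist l)
    (hwp : ∀ x ∈ w, p x = false) (h : w.length + 2 ≤ l.countP p) :
    ∃ w₁ w₂ a b, w = w₁ ++ w₂ ∧ p a = true ∧ p b = true ∧
      (w₁ ++ a :: b :: w₂).Sublist l :=
  (gap_lemma_aux p l w hw hwp).2 h

theorem sublist_of_sublist_filterMap {V β : Type*} :
    ∀ {l : List (V ⊕ β)} {w : List V}, w.Sublist (l.filterMap Sum.getLeft?) →
      (w.map Sum.inl).Sublist l
  | [], w => by intro h; simp at h; simp [h]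
  | Sum.inl a :: t, w => by
      intro h
      rw [List.filterMap_cons] at h
      simp only [Sum.getLeft?] at h
      rw [List.sublist_cons_iff] at h
      rcases h with h | ⟨r, rfl, hr⟩
      · exact (sublist_of_sublist_filterMap h).cons _
      · simpa using (sublist_of_sublist_filterMap hr).cons₂ (Sum.inl a)
  | Sum.inr b :: t, w => by
      intro h
      rw [List.filterMap_cons] at h
      simp only [Sum.getLeft?] at h
      exact (sublist_of_sublist_filterMap h).cons _

theorem backward_dir {V : Type*} (E : Set (Set V)) (k : ℕ) (hk : 0 < k)
    (π' : List (V ⊕ Fin (2 * k + 1))) (hnd' : π'.Nodup)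
    (hmem' : ∀ s, s ∈ π' ↔ s ∈ (Set.univ : Set (V ⊕ Fin (2 * k + 1))))
    (hfree' : ∀ A' ∈ ExtendedEdges (2 * k + 1) E, ∀ B' ∈ ExtendedEdges (2 * k + 1) E,
      ¬ FormPattern (2 * k + 1) A' B' π') :
    ∃ π : List V, (π.Nodup ∧ ∀ v, v ∈ π ↔ v ∈ (Set.univ : Set V)) ∧
      ∀ A ∈ E, ∀ B ∈ E, ¬ FormPattern (2 * k - 1) A B π := by
  classical
  refine ⟨π'.filterMap Sum.getLeft?, ⟨?_, ?_⟩, ?_⟩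
  · refine List.Nodup.filterMap ?_ hnd'
    intro s s' y hy hy'
    rw [Option.mem_def, Sum.getLeft?_eq_some_iff] at hy hy'
    rw [hy, hy']
  · intro v
    simp only [List.mem_filterMap, Set.mem_univ, iff_true]
    exact ⟨Sum.inl v, (hmem' _).2 trivial, by simp⟩
  · rintro A hAE B hBE ⟨w, hwsub, hwlen, hwpat⟩
    have hw' : (w.map Sum.inl).Sublist π' := sublist_of_sublist_filterMap hwsub
    -- count the right elements of π'
    have hcount : 2 * k + 1 ≤ π'.countP (fun s => s.isRight) := by
      have hsp : ((List.finRange (2 * k + 1)).map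
          (Sum.inr : Fin (2 * k + 1) → V ⊕ Fin (2 * k + 1))).Subperm π' :=
        List.Nodup.subperm ((List.nodup_finRange _).map Sum.inr_injective)
          (fun s _ => (hmem' s).2 trivial)
      have := hsp.countP_le (fun s => s.isRight)
      rw [List.countP_map] at this
      simpa [Function.comp_def] using this
    obtain ⟨w₁, w₂, a, b, heq, ha, hb, hsub⟩ :=
      gap_lemma (fun s => s.isRight) π' (w.map Sum.inl) hw' (by simp)
        (by simp only [List.length_map, hwlen]; omega)
    obtain ⟨xa, rfl⟩ := Sum.isRight_iff.mp ha
    obtain ⟨xb, rfl⟩ := Sum.isRight_iff.mp hb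
    have hWnd : (w₁ ++ Sum.inr xa :: Sum.inr xb :: w₂).Nodup := hsub.nodup hnd'
    have hab : xa ≠ xb := by
      have h1 := hWnd.of_append_right
      rw [List.nodup_cons] at h1
      intro hc; exact h1.1 (by simp [hc])
    have hL : (w₁ ++ [Sum.inr xa, Sum.inr xb]).length = w₁.length + 2 := by simp
    set j := w₁.length with hj
    have hw12 : w₁.length + w₂.length = 2 * k - 1 := by
      have := congrArg List.length heq
      simp only [List.length_map, List.length_append, hwlen] at this
      omega
    -- the two extended edges
    set u : Fin (2 * k + 1) := if j % 2 = 0 then xa else xb with hu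
    set v : Fin (2 * k + 1) := if j % 2 = 0 then xb else xa with hv
    have huv : u ≠ v := by
      by_cases hjp : j % 2 = 0 <;> simp [hu, hv, hjp] <;> [exact hab; exact hab.symm]
    set A' : Set (V ⊕ Fin (2 * k + 1)) := Sum.inl '' A ∪ {Sum.inr u} with hA'
    set B' : Set (V ⊕ Fin (2 * k + 1)) := Sum.inl '' B ∪ {Sum.inr v} with hB'
    have hA'mem : A' ∈ ExtendedEdges (2 * k + 1) E := Or.inr ⟨A, hAE, u, rfl⟩
    have hB'mem : B' ∈ ExtendedEdges (2 * k + 1) E := Or.inr ⟨B, hBE, v, rfl⟩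
    have hinlA' : ∀ y : V, (Sum.inl y ∈ A') ↔ y ∈ A := by intro y; simp [hA']
    have hinlB' : ∀ y : V, (Sum.inl y ∈ B') ↔ y ∈ B := by intro y; simp [hB']
    have hinrA' : ∀ z : Fin (2 * k + 1), (Sum.inr z ∈ A') ↔ z = u := by intro z; simp [hA']
    have hinrB' : ∀ z : Fin (2 * k + 1), (Sum.inr z ∈ B') ↔ z = v := by intro z; simp [hB']
    refine hfree' A' hA'mem B' hB'mem
      ⟨(w₁ ++ [Sum.inr xa, Sum.inr xb]) ++ w₂, ?_, ?_, ?_⟩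
    · simpa [List.append_assoc] using hsub
    · simp only [List.length_append, List.length_cons, List.length_nil]
      omega
    · intro i hi
      have hiW : i < 2 * k + 1 := by
        simpa only [List.length_append, List.length_cons, List.length_nil,
          show w₁.length + (1 + (1 + 0)) + w₂.length = 2 * k + 1 by omega] using hi
      have hmapel : ∀ m (hm : m < w.length),
          (w₁ ++ w₂)[m]'(by
            have := congrArg List.length heq
            simp only [List.length_map] at this
            omega) = Sum.inl (w[m]'hm) := by
        intro m hm
        have h6 : (w.map (Sum.inl : V → V ⊕ Fin (2 * k + 1)))[m]'(by simpa using hm)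
            = (w₁ ++ w₂)[m]'(by
              have := congrArg List.length heq
              simp only [List.length_map] at this
              omega) := List.getElem_of_eq heq _
        rw [← h6]
        exact List.getElem_map _
      rcases lt_trichotomy i j with hij | rfl | hij
      · -- i < j : original pattern element
        have e1 : ((w₁ ++ [Sum.inr xa, Sum.inr xb]) ++ w₂)[i]'hi
            = w₁[i]'hij := by
          rw [List.getElem_append_left (by simp; omega), List.getElem_append_left hij]
        have hiw : i < w.length := by omega
        have e2 : (w₁ ++ w₂)[i]'(by simp; omega) = w₁[i]'hij :=
          List.getElem_append_left hij
        have e3 : ((w₁ ++ [Sum.inr xa, Sum.inr xb]) ++ w₂)[i]'hi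
            = Sum.inl (w[i]'hiw) := by rw [e1, ← e2, hmapel i hiw]
        have hp := hwpat i hiw
        constructor
        · intro hpe
          have := hp.1 hpe
          rw [e3]
          exact ⟨(hinlA' _).2 this.1, fun hc => this.2 ((hinlB' _).1 hc)⟩
        · intro hpo
          have := hp.2 hpo
          rw [e3]
          exact ⟨(hinlB' _).2 this.1, fun hc => this.2 ((hinlA' _).1 hc)⟩
      · -- i = j : the element a = inr xa
        have e1 : ((w₁ ++ [Sum.inr xa, Sum.inr xb]) ++ w₂)[j]'hi = Sum.inr xa := by
          rw [List.getElem_append_left (by rw [hL]; omega : j < (w₁ ++ [Sum.inr xa, Sum.inr xb]).length),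
            List.getElem_append_right (le_refl j)]
          simp [hj]
        rw [e1]
        constructor
        · intro hpe
          refine ⟨(hinrA' _).2 (by simp [hu, hpe]), fun hc => ?_⟩
          have := (hinrB' _).1 hc
          rw [hv, if_pos hpe] at this
          exact hab this
        · intro hpo
          have hpe : ¬ j % 2 = 0 := by omega
          refine ⟨(hinrB' _).2 (by simp [hv, if_neg hpe]), fun hc => ?_⟩
          have := (hinrA' _).1 hc
          rw [hu, if_neg hpe] at this
          exact hab this
      · rcases Nat.lt_or_ge i (j + 2) with hij2 | hij2
        · -- i = j + 1 : the element b = inr xb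
          have hij1 : i = j + 1 := by omega
          subst hij1
          have e1 : ((w₁ ++ [Sum.inr xa, Sum.inr xb]) ++ w₂)[j + 1]'hi = Sum.inr xb := by
            rw [List.getElem_append_left (by rw [hL]; omega : j + 1 < (w₁ ++ [Sum.inr xa, Sum.inr xb]).length),
              List.getElem_append_right (by omega : w₁.length ≤ j + 1)]
            simp [hj, Nat.add_sub_cancel_left]
          rw [e1]
          constructor
          · intro hpe
            have hj0 : ¬ j % 2 = 0 := by omega
            refine ⟨(hinrA' _).2 (by simp [hu, if_neg hj0]), fun hc => ?_⟩
            have := (hinrB' _).1 hc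
            rw [hv, if_neg hj0] at this
            exact hab this.symm
          · intro hpo
            have hj0 : j % 2 = 0 := by omega
            refine ⟨(hinrB' _).2 (by simp [hv, if_pos hj0]), fun hc => ?_⟩
            have := (hinrA' _).1 hc
            rw [hu, if_pos hj0] at this
            exact hab this.symm
        · -- i ≥ j + 2 : shifted original pattern element
          have hiw : i - 2 < w.length := by omega
          have e1 : ((w₁ ++ [Sum.inr xa, Sum.inr xb]) ++ w₂)[i]'hi
              = w₂[i - (j + 2)]'(by omega) := by
            rw [List.getElem_append_right (by rw [hL]; omega : (w₁ ++ [Sum.inr xa, Sum.inr xb]).length ≤ i)]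
            congr 1
            rw [hL]
          have e2 : (w₁ ++ w₂)[i - 2]'(by simp; omega) = w₂[i - (j + 2)]'(by omega) := by
            rw [List.getElem_append_right (by omega : w₁.length ≤ i - 2)]
            congr 1
            omega
          have e3 : ((w₁ ++ [Sum.inr xa, Sum.inr xb]) ++ w₂)[i]'hi
              = Sum.inl (w[i - 2]'hiw) := by rw [e1, ← e2, hmapel (i - 2) hiw]
          have hp := hwpat (i - 2) hiw
          constructor
          · intro hpe
            have := hp.1 (by omega)
            rw [e3]
            exact ⟨(hinlA' _).2 this.1, fun hc => this.2 ((hinlB' _).1 hc)⟩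
          · intro hpo
            have := hp.2 (by omega)
            rw [e3]
            exact ⟨(hinlB' _).2 this.1, fun hc => this.2 ((hinlA' _).1 hc)⟩

theorem mem_extendedEdges' {V : Type*} {t : ℕ} {E : Set (Set V)} {A' : Set (V ⊕ Fin t)}
    (h : A' ∈ ExtendedEdges t E) :
    ∃ A ∈ E, (∀ v : V, Sum.inl v ∈ A' ↔ v ∈ A) ∧
      ∀ x y : Fin t, Sum.inr x ∈ A' → Sum.inr y ∈ A' → x = y := by
  rcases h with ⟨A, hA, rfl⟩ | ⟨A, hA, x, rfl⟩
  · exact ⟨A, hA, fun v => by simp [Sum.inl.injEq], fun x y hx hy => by simp at hx⟩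
  · refine ⟨A, hA, fun v => by simp, fun x' y hx hy => ?_⟩
    simp at hx hy; omega

theorem forward_dir {V : Type*} (E : Set (Set V)) (k : ℕ) (hk : 0 < k)
    (h : HasFreeOrdering (2 * k - 1) (Set.univ : Set V) E) :
    HasFreeOrdering (2 * k + 1) (Set.univ : Set (V ⊕ Fin (2 * k + 1)))
      (ExtendedEdges (2 * k + 1) E) := by
  classical
  obtain ⟨π, ⟨hnd, hmem⟩, hfree⟩ := h
  set π' : List (V ⊕ Fin (2 * k + 1)) :=
    ((List.finRange (2 * k + 1)).map Sum.inr) ++ π.map Sum.inl with hπ'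
  have hnd' : π'.Nodup := by
    refine List.Nodup.append ?_ ?_ ?_
    · exact (List.nodup_finRange _).map Sum.inr_injective
    · exact hnd.map Sum.inl_injective
    · intro s hs1 hs2
      simp only [List.mem_map] at hs1 hs2
      obtain ⟨x, -, rfl⟩ := hs1
      obtain ⟨a, -, h2⟩ := hs2
      cases h2
  refine ⟨π', ⟨hnd', ?_⟩, ?_⟩
  · intro s
    simp only [Set.mem_univ, iff_true]
    rcases s with a | x
    · exact List.mem_append_right _ (List.mem_map_of_mem ((hmem a).2 trivial))
    · exact List.mem_append_left _ (List.mem_map_of_mem (List.mem_finRange x))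
  · rintro A' hA' B' hB' ⟨w, hwsub, hwlen, hwpat⟩
    obtain ⟨A, hAE, hAl, hAr⟩ := mem_extendedEdges' hA'
    obtain ⟨B, hBE, hBl, hBr⟩ := mem_extendedEdges' hB'
    rw [hπ', List.sublist_append_iff] at hwsub
    obtain ⟨w1, w2, rfl, h1, h2⟩ := hwsub
    have hwnd : (w1 ++ w2).Nodup := by
      refine List.Sublist.nodup ?_ hnd'
      rw [hπ', List.sublist_append_iff]
      exact ⟨w1, w2, rfl, h1, h2⟩
    have hlen : (w1 ++ w2).length = 2 * k + 1 := hwlen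
    rw [List.length_append] at hlen
    -- each element of w1 is of the form inr x
    have hw1r : ∀ i (hi : i < w1.length), ∃ x, w1[i] = Sum.inr x := by
      intro i hi
      have := h1.subset (List.getElem_mem hi)
      simp only [List.mem_map] at this
      obtain ⟨x, -, hx⟩ := this
      exact ⟨x, hx.symm⟩
    have hw1len : w1.length ≤ 2 := by
      by_contra hcon
      push_neg at hcon
      have h0 : (0:ℕ) < (w1 ++ w2).length := by rw [List.length_append]; omega
      have h2' : (2:ℕ) < (w1 ++ w2).length := by rw [List.length_append]; omega
      have e0 : (w1 ++ w2)[0] = w1[0]'(by omega) := List.getElem_append_left (by omega)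
      have e2 : (w1 ++ w2)[2] = w1[2]'(by omega) := List.getElem_append_left (by omega)
      obtain ⟨x0, hx0⟩ := hw1r 0 (by omega)
      obtain ⟨x2, hx2⟩ := hw1r 2 (by omega)
      have p0 := (hwpat 0 h0).1 rfl
      have p2 := (hwpat 2 h2').1 rfl
      rw [e0, hx0] at p0
      rw [e2, hx2] at p2
      have : x0 = x2 := hAr x0 x2 p0.1 p2.1
      have : (w1 ++ w2)[0] = (w1 ++ w2)[2] := by rw [e0, e2, hx0, hx2, this]
      rw [hwnd.getElem_inj_iff] at this
      omega
    -- drop an even prefix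
    set d : ℕ := w1.length + w1.length % 2 with hd
    have hdeven : d % 2 = 0 := by omega
    have hdle : d ≤ 2 := by omega
    have hw3 : (w1 ++ w2).drop d = w2.drop (w1.length % 2) := by
      rw [hd, List.drop_append]
      rw [List.drop_eq_nil_of_le (by omega), Nat.add_sub_cancel_left, List.nil_append]
    have hw3sub : ((w1 ++ w2).drop d).Sublist (π.map Sum.inl) := by
      rw [hw3]; exact (List.drop_sublist _ _).trans h2
    rw [List.sublist_map_iff] at hw3sub
    obtain ⟨w4, hw4sub, hw4eq⟩ := hw3sub
    have hw4len : w4.length = 2 * k + 1 - d := by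
      have := congrArg List.length hw4eq
      simp only [List.length_drop, List.length_map] at this
      rw [List.length_append] at this
      omega
    refine hfree A hAE B hBE ⟨w4.take (2 * k - 1), (List.take_sublist _ _).trans hw4sub, ?_, ?_⟩
    · rw [List.length_take]; omega
    · intro i hi
      rw [List.length_take] at hi
      have hi' : i < 2 * k - 1 := lt_of_lt_of_le hi (min_le_left _ _)
      have hi4 : i < w4.length := by omega
      have e1 : (w4.take (2 * k - 1))[i] = w4[i] := List.getElem_take
      have hdi : d + i < (w1 ++ w2).length := by rw [List.length_append]; omega
      have e2 : (Sum.inl (w4[i]'hi4) : V ⊕ Fin (2 * k + 1)) = (w1 ++ w2)[d + i] := by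
        have h5 : ((w4.map (Sum.inl : V → V ⊕ Fin (2 * k + 1)))[i]'(by simpa using hi4))
            = (w1 ++ w2)[d + i] := by
          simp only [← hw4eq, List.getElem_drop]
        rw [← h5, List.getElem_map]
      have hpar := hwpat (d + i) hdi
      constructor
      · intro hpe
        have := hpar.1 (by omega)
        rw [← e2] at this
        rw [e1]
        exact ⟨(hAl _).1 this.1, fun hc => this.2 ((hBl _).2 hc)⟩
      · intro hpo
        have := hpar.2 (by omega)
        rw [← e2] at this
        rw [e1]
        exact ⟨(hBl _).1 this.1, fun hc => this.2 ((hAl _).2 hc)⟩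

/-- **Lemma (odd–odd).** A hypergraph `H = (V, E)` is `(AB)^(k-1) A`-free if
and only if the hypergraph `H_{2k+1}`, obtained from `H` by adding `2k+1` new
vertices and extending each edge by each single new vertex, is `(AB)^k A`-free.
(An `(AB)^(k-1) A` pattern has length `2k - 1`; an `(AB)^k A` pattern has
length `2k + 1`.) -/
theorem ABkA_free_iff_extended {V : Type*} [Fintype V] (E : Set (Set V))
    (k : ℕ) (hk : 0 < k) :
    HasFreeOrdering (2 * k - 1) (Set.univ : Set V) E ↔
      HasFreeOrdering (2 * k + 1) (Set.univ : Set (V ⊕ Fin (2 * k + 1)))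
        (ExtendedEdges (2 * k + 1) E) := by
  constructor
  · exact fun h => forward_dir E k hk h
  · rintro ⟨π', ⟨hnd', hmem'⟩, hfree'⟩
    obtain ⟨π, hord, hfree⟩ := backward_dir E k hk π' hnd' hmem' hfree'
    exact ⟨π, hord, hfree⟩
end

section
/- Let H = (V, E) be a hypergraph and let k be a positive integer. Then H is (AB)^k-free if and only if the hypergraph H_{2k+2} is (AB)^(k+1)-free, where H_{2k+2} is obtained from H by adding 2k+2 new vertices X = {x₁, …, x_{2k+2}} and taking edge set E ∪ {E ∪ {x} : E ∈ E, x ∈ X}. -/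
open List

section Aux

lemma pair_insert {α : Type*} : ∀ (σ u s : List α), u <+ σ → s <+ σ → (∀ a ∈ s, a ∉ u) →
    (u.length + 2 ≤ s.length →
      ∃ i ≤ u.length, ∃ x ∈ s, ∃ y ∈ s, (u.take i ++ x :: y :: u.drop i) <+ σ)
    ∧ (u.length + 1 ≤ s.length →
      (∃ i ≤ u.length, ∃ x ∈ s, ∃ y ∈ s, (u.take i ++ x :: y :: u.drop i) <+ σ)
      ∨ ∃ y ∈ s, (y :: u) <+ σ) := by
  intro σ
  induction σ with
  | nil =>
    intro u s hu hs _
    have : s = [] := sublist_nil.mp hs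
    subst this
    simp
  | cons a σ ih =>
    intro u s hu hs hdisj
    rcases sublist_cons_iff.mp hu with hu' | ⟨u', rfl, hu'⟩
    · rcases sublist_cons_iff.mp hs with hs' | ⟨s', rfl, hs'⟩
      · obtain ⟨H1, H2⟩ := ih u s hu' hs' hdisj
        constructor
        · intro hl
          obtain ⟨i, hi, x, hx, y, hy, hsub⟩ := H1 hl
          exact ⟨i, hi, x, hx, y, hy, hsub.cons a⟩
        · intro hl
          rcases H2 hl with ⟨i, hi, x, hx, y, hy, hsub⟩ | ⟨y, hy, hsub⟩
          · exact Or.inl ⟨i, hi, x, hx, y, hy, hsub.cons a⟩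
          · exact Or.inr ⟨y, hy, hsub.cons a⟩
      · have hdisj' : ∀ b ∈ s', b ∉ u := fun b hb => hdisj b (mem_cons_of_mem a hb)
        obtain ⟨H1, H2⟩ := ih u s' hu' hs' hdisj'
        constructor
        · intro hl
          have hl' : u.length + 1 ≤ s'.length := by
            simp only [length_cons] at hl; omega
          rcases H2 hl' with ⟨i, hi, x, hx, y, hy, hsub⟩ | ⟨y, hy, hsub⟩
          · exact ⟨i, hi, x, mem_cons_of_mem a hx, y, mem_cons_of_mem a hy, hsub.cons a⟩
          · refine ⟨0, Nat.zero_le _, a, (mem_cons_self : a ∈ a :: s'), y, mem_cons_of_mem a hy, ?_⟩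
            simpa using hsub.cons₂ a
        · intro _
          exact Or.inr ⟨a, (mem_cons_self : a ∈ a :: s'), hu'.cons₂ a⟩
    · have ha : a ∉ s := fun h => hdisj a h (mem_cons_self : a ∈ a :: u')
      have hs' : s <+ σ := by
        rcases sublist_cons_iff.mp hs with h | ⟨r, rfl, hr⟩
        · exact h
        · exact absurd (mem_cons_self : a ∈ a :: r) ha
      have hdisj' : ∀ b ∈ s, b ∉ u' := fun b hb h => hdisj b hb (mem_cons_of_mem a h)
      obtain ⟨H1, H2⟩ := ih u' s hu' hs' hdisj'
      constructor
      · intro hl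
        have hl' : u'.length + 2 ≤ s.length := by
          simp only [length_cons] at hl; omega
        obtain ⟨i, hi, x, hx, y, hy, hsub⟩ := H1 hl'
        refine ⟨i + 1, by simp; omega, x, hx, y, hy, ?_⟩
        simpa using hsub.cons₂ a
      · intro hl
        have hl' : u'.length + 2 ≤ s.length := by
          simp only [length_cons] at hl; omega
        obtain ⟨i, hi, x, hx, y, hy, hsub⟩ := H1 hl'
        exact Or.inl ⟨i + 1, by simp; omega, x, hx, y, hy, by simpa using hsub.cons₂ a⟩

lemma FormPattern_insert2 {α : Type*} {A' B' : Set α} {σ u : List α} {i : ℕ} (hi : i ≤ u.length)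
    {x y : α} (hsub : (u.take i ++ x :: y :: u.drop i) <+ σ)
    (hu : ∀ j (h : j < u.length), (j % 2 = 0 → u[j] ∈ A' \ B') ∧ (j % 2 = 1 → u[j] ∈ B' \ A'))
    (hx : (i % 2 = 0 → x ∈ A' \ B') ∧ (i % 2 = 1 → x ∈ B' \ A'))
    (hy : ((i+1) % 2 = 0 → y ∈ A' \ B') ∧ ((i+1) % 2 = 1 → y ∈ B' \ A')) :
    FormPattern (u.length + 2) A' B' σ := by
  have hlt : (u.take i).length = i := by simp [length_take]; omega
  have hlen : (u.take i ++ x :: y :: u.drop i).length = u.length + 2 := by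
    simp [length_append, length_take, length_drop]; omega
  refine ⟨_, hsub, hlen, ?_⟩
  intro j hj
  rw [hlen] at hj
  rcases lt_or_ge j i with hji | hji
  · have h1 : j < (u.take i).length := by omega
    rw [getElem_append_left h1, getElem_take]
    exact hu j (by omega)
  · have h2 : (u.take i).length ≤ j := by omega
    rw [getElem_append_right h2]
    rcases Nat.lt_or_ge j (i+1) with hj1 | hj1
    · have hji' : j = i := by omega
      simp only [show j - (u.take i).length = 0 by omega, getElem_cons_zero]
      rw [hji']; exact hx
    rcases Nat.lt_or_ge j (i+2) with hj2 | hj2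
    · have hji' : j = i + 1 := by omega
      simp only [show j - (u.take i).length = 1 by omega, getElem_cons_succ, getElem_cons_zero]
      rw [hji']; exact hy
    · obtain ⟨m, rfl⟩ : ∃ m, j = i + 2 + m := ⟨j - i - 2, by omega⟩
      have hmlt : i + m < u.length := by omega
      simp only [show i + 2 + m - (u.take i).length = m + 2 by omega, getElem_cons_succ,
        getElem_drop]
      have := hu (i+m) hmlt
      exact ⟨fun hp => this.1 (by omega), fun hp => this.2 (by omega)⟩

lemma mapinl_filterMap_sublist {V W : Type*} :
    ∀ σ : List (V ⊕ W), (σ.filterMap Sum.getLeft?).map Sum.inl <+ σ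
  | [] => nil_sublist _
  | (Sum.inl v) :: σ => by
      simpa using (mapinl_filterMap_sublist σ).cons₂ (Sum.inl v)
  | (Sum.inr w) :: σ => by
      simpa [List.filterMap_cons] using (mapinl_filterMap_sublist σ).cons (Sum.inr w)

lemma ext_facts {V : Type*} {t : ℕ} {E : Set (Set V)} {A' : Set (V ⊕ Fin t)}
    (h : A' ∈ ExtendedEdges t E) :
    ∃ A ∈ E, (∀ v, Sum.inl v ∈ A' ↔ v ∈ A) ∧
      ∀ z z' : Fin t, Sum.inr z ∈ A' → Sum.inr z' ∈ A' → z = z' := by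
  rcases h with ⟨A, hA, rfl⟩ | ⟨A, hA, x, rfl⟩
  · exact ⟨A, hA, fun v => by simp, fun z z' hz => by simp at hz⟩
  · refine ⟨A, hA, fun v => by simp, fun z z' hz hz' => ?_⟩
    simp only [Set.mem_union, Set.mem_image, Set.mem_singleton_iff] at hz hz'
    rcases hz with ⟨v, _, h⟩ | h
    · exact absurd h (by simp)
    rcases hz' with ⟨v, _, h'⟩ | h'
    · exact absurd h' (by simp)
    rw [Sum.inr.injEq] at h h'
    rw [h, h']

end Aux


/-- **Lemma (even–even).** A hypergraph `H = (V, E)` is `(AB)^k`-free if and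
only if the hypergraph `H_{2k+2}`, obtained from `H` by adding `2k+2` new
vertices and extending each edge by each single new vertex, is
`(AB)^(k+1)`-free. (An `(AB)^k` pattern has length `2k`; an `(AB)^(k+1)`
pattern has length `2k + 2`.) -/
theorem ABk_free_iff_extended {V : Type*} [Fintype V] (E : Set (Set V))
    (k : ℕ) (hk : 0 < k) :
    HasFreeOrdering (2 * k) (Set.univ : Set V) E ↔
      HasFreeOrdering (2 * k + 2) (Set.univ : Set (V ⊕ Fin (2 * k + 2)))
        (ExtendedEdges (2 * k + 2) E) := by
  constructor
  · rintro ⟨π, ⟨hnd, hmem⟩, hfree⟩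
    set σ : List (V ⊕ Fin (2*k+2)) :=
      π.map Sum.inl ++ (List.finRange (2*k+2)).map Sum.inr with hσ
    have hσnd : σ.Nodup := by
      refine Nodup.append (hnd.map Sum.inl_injective)
        ((nodup_finRange _).map Sum.inr_injective) ?_
      intro z hz1 hz2
      simp only [mem_map] at hz1 hz2
      obtain ⟨v, _, rfl⟩ := hz1
      obtain ⟨x, _, h⟩ := hz2
      exact Sum.inl_ne_inr h.symm
    refine ⟨σ, ⟨hσnd, ?_⟩, ?_⟩
    · intro z
      simp only [Set.mem_univ, iff_true, hσ, mem_append, mem_map]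
      cases z with
      | inl v => exact Or.inl ⟨v, (hmem v).mpr (Set.mem_univ v), rfl⟩
      | inr x => exact Or.inr ⟨x, mem_finRange x, rfl⟩
    · rintro A' hA' B' hB' ⟨w, hw, hwlen, hpat⟩
      obtain ⟨A, hA, hAmem, hAinr⟩ := ext_facts hA'
      obtain ⟨B, hB, hBmem, hBinr⟩ := ext_facts hB'
      have hwnd : w.Nodup := hw.nodup hσnd
      rw [hσ, sublist_append_iff] at hw
      obtain ⟨w₁, w₂, rfl, hw₁, hw₂⟩ := hw
      rw [length_append] at hwlen
      -- w₂ has length at most 2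
      have h2 : w₂.length ≤ 2 := by
        by_contra h
        push_neg at h
        set p := w₁.length with hp
        have hplt : ∀ m, m < w₂.length → p + m < (w₁ ++ w₂).length := by
          intro m hm; rw [length_append]; omega
        have hgw : ∀ (m : ℕ) (hm : m < w₂.length),
            (w₁ ++ w₂)[p + m]'(hplt m hm) = w₂[m] := by
          intro m hm
          rw [getElem_append_right (by omega)]
          congr 1
          omega
        have hinr : ∀ (m : ℕ) (hm : m < w₂.length), ∃ z, w₂[m] = Sum.inr z := by
          intro m hm
          have : w₂[m] ∈ (List.finRange (2*k+2)).map Sum.inr :=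
            hw₂.subset (getElem_mem _)
          simp only [mem_map] at this
          obtain ⟨z, _, hz⟩ := this
          exact ⟨z, hz.symm⟩
        obtain ⟨z0, hz0⟩ := hinr 0 (by omega)
        obtain ⟨z2, hz2⟩ := hinr 2 (by omega)
        have e0 : (w₁ ++ w₂)[p]'(by rw [length_append]; omega) = Sum.inr z0 := by
          have := hgw 0 (by omega)
          simpa [hz0] using this
        have e2 : (w₁ ++ w₂)[p + 2]'(by rw [length_append]; omega) = Sum.inr z2 := by
          rw [hgw 2 (by omega), hz2]
        have hpat0 := hpat p (by rw [length_append]; omega)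
        have hpat2 := hpat (p + 2) (by rw [length_append]; omega)
        have hne : (p : ℕ) ≠ p + 2 := by omega
        have heq : z0 = z2 → False := by
          intro hzz
          have : (w₁ ++ w₂)[p]'(by rw [length_append]; omega)
              = (w₁ ++ w₂)[p + 2]'(by rw [length_append]; omega) := by
            rw [e0, e2, hzz]
          exact hne ((hwnd.getElem_inj_iff).mp this)
        rcases Nat.even_or_odd p with hpe | hpo
        · have hp0 : p % 2 = 0 := Nat.even_iff.mp hpe
          have m0 := (hpat0.1 hp0)
          have m2 := (hpat2.1 (by omega))
          rw [e0] at m0; rw [e2] at m2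
          exact heq (hAinr z0 z2 m0.1 m2.1)
        · have hp1 : p % 2 = 1 := Nat.odd_iff.mp hpo
          have m0 := (hpat0.2 hp1)
          have m2 := (hpat2.2 (by omega))
          rw [e0] at m0; rw [e2] at m2
          exact heq (hBinr z0 z2 m0.1 m2.1)
      have h1 : 2 * k ≤ w₁.length := by omega
      -- extract the first 2k elements
      have htake : (w₁ ++ w₂).take (2*k) = w₁.take (2*k) :=
        take_append_of_le_length h1
      have hsubtake : (w₁ ++ w₂).take (2*k) <+ π.map Sum.inl := by
        rw [htake]; exact (take_sublist _ _).trans hw₁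
      rw [sublist_map_iff] at hsubtake
      obtain ⟨w₀, hw₀, hw₀eq⟩ := hsubtake
      have hw₀len : w₀.length = 2 * k := by
        have := congrArg length hw₀eq
        simp only [length_take, length_append, length_map] at this ⊢
        omega
      refine hfree A hA B hB ⟨w₀, hw₀, hw₀len, ?_⟩
      intro j hj
      have hjlt : j < (w₁ ++ w₂).length := by
        rw [length_append]; omega
      have hj2k : j < 2 * k := by omega
      have hgj : Sum.inl (w₀[j]'hj) = (w₁ ++ w₂)[j]'hjlt := by
        have h3 : ((w₁ ++ w₂).take (2*k))[j]'(by
            simp only [length_take]; omega) = (w₁ ++ w₂)[j]'hjlt := by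
          simp
        rw [← h3, getElem_of_eq hw₀eq]
        simp
      have hpatj := hpat j hjlt
      constructor
      · intro hpar
        have hm := hpatj.1 hpar
        rw [← hgj] at hm
        refine ⟨(hAmem _).mp hm.1, fun hb => hm.2 ((hBmem _).mpr hb)⟩
      · intro hpar
        have hm := hpatj.2 hpar
        rw [← hgj] at hm
        refine ⟨(hBmem _).mp hm.1, fun hb => hm.2 ((hAmem _).mpr hb)⟩
  · rintro ⟨σ, ⟨hσnd, hσmem⟩, hfree⟩
    set π : List V := σ.filterMap Sum.getLeft? with hπ
    have hπnd : π.Nodup := by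
      refine hσnd.filterMap ?_
      intro a a' b hb hb'
      cases a with
      | inl v => cases a' with
        | inl v' =>
          simp only [Sum.getLeft?, Option.mem_def, Option.some.injEq] at hb hb'
          rw [hb, hb']
        | inr x => simp [Sum.getLeft?] at hb'
      | inr x => simp [Sum.getLeft?] at hb
    refine ⟨π, ⟨hπnd, ?_⟩, ?_⟩
    · intro v
      simp only [Set.mem_univ, iff_true, hπ, mem_filterMap]
      exact ⟨Sum.inl v, (hσmem _).mpr (Set.mem_univ _), rfl⟩
    · rintro A hA B hB ⟨w, hw, hwlen, hpat⟩
      set u : List (V ⊕ Fin (2*k+2)) := w.map Sum.inl with hu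
      have husub : u <+ σ := (hw.map Sum.inl).trans (mapinl_filterMap_sublist σ)
      have hulen : u.length = 2 * k := by simp [hu, hwlen]
      set s : List (V ⊕ Fin (2*k+2)) := σ.filter (Sum.isRight ·) with hs
      have hssub : s <+ σ := filter_sublist
      have hsnd : s.Nodup := hssub.nodup hσnd
      have hsmem : ∀ z, z ∈ s ↔ z.isRight = true := by
        intro z
        simp [hs, mem_filter, (hσmem z).mpr (Set.mem_univ z)]
      have hslen : s.length = 2 * k + 2 := by
        have hperm : s ~ (List.finRange (2*k+2)).map Sum.inr := by
          refine (perm_ext_iff_of_nodup hsnd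
            (((nodup_finRange _)).map Sum.inr_injective)).mpr ?_
          intro z
          cases z with
          | inl v => simp [hsmem]
          | inr x => simp [hsmem, mem_finRange]
        simpa using hperm.length_eq
      have hdisj : ∀ a ∈ s, a ∉ u := by
        intro a has hau
        have h1 : a.isRight = true := (hsmem a).mp has
        rw [hu, mem_map] at hau
        obtain ⟨v, _, rfl⟩ := hau
        simp at h1
      obtain ⟨i, hi, x, hx, y, hy, hsub⟩ :=
        (pair_insert σ u s husub hssub hdisj).1 (by omega)
      obtain ⟨x', rfl⟩ : ∃ x', x = Sum.inr x' := by
        have := (hsmem x).mp hx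
        cases x with
        | inl v => simp at this
        | inr x' => exact ⟨x', rfl⟩
      obtain ⟨y', rfl⟩ : ∃ y', y = Sum.inr y' := by
        have := (hsmem y).mp hy
        cases y with
        | inl v => simp at this
        | inr y' => exact ⟨y', rfl⟩
      have hxyne : x' ≠ y' := by
        have htnd := hsub.nodup hσnd
        have h2 := htnd.of_append_right
        rw [nodup_cons] at h2
        intro h
        exact h2.1 (by rw [h]; exact mem_cons_self)
      -- define the extended edges according to the parity of i
      set a' : Fin (2*k+2) := if i % 2 = 0 then x' else y' with ha'
      set b' : Fin (2*k+2) := if i % 2 = 0 then y' else x' with hb'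
      set A' : Set (V ⊕ Fin (2*k+2)) := Sum.inl '' A ∪ {Sum.inr a'} with hA'
      set B' : Set (V ⊕ Fin (2*k+2)) := Sum.inl '' B ∪ {Sum.inr b'} with hB'
      have hA'mem : A' ∈ ExtendedEdges (2*k+2) E := Or.inr ⟨A, hA, a', rfl⟩
      have hB'mem : B' ∈ ExtendedEdges (2*k+2) E := Or.inr ⟨B, hB, b', rfl⟩
      have habne : a' ≠ b' := by
        rw [ha', hb']
        by_cases h : i % 2 = 0 <;> simp [h, hxyne, hxyne.symm]
      have hinlA : ∀ v, Sum.inl v ∈ A' \ B' ↔ v ∈ A \ B := by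
        intro v
        simp [hA', hB', Sum.inl_injective.eq_iff]
      have hinlB : ∀ v, Sum.inl v ∈ B' \ A' ↔ v ∈ B \ A := by
        intro v
        simp [hA', hB', Sum.inl_injective.eq_iff]
      have hualt : ∀ j (h : j < u.length),
          (j % 2 = 0 → u[j] ∈ A' \ B') ∧ (j % 2 = 1 → u[j] ∈ B' \ A') := by
        intro j hjlt
        have hjw : j < w.length := by
          rw [hu, length_map] at hjlt; exact hjlt
        have : u[j]'hjlt = Sum.inl (w[j]'hjw) := by simp [hu]
        rw [this]
        have := hpat j hjw
        exact ⟨fun hp => (hinlA _).mpr (this.1 hp), fun hp => (hinlB _).mpr (this.2 hp)⟩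
      have hxin : Sum.inr a' ∈ A' \ B' := by
        constructor
        · exact Or.inr rfl
        · intro h
          rcases h with ⟨v, _, h⟩ | h
          · exact Sum.inl_ne_inr h
          · exact habne (Sum.inr_injective h.symm).symm
      have hyin : Sum.inr b' ∈ B' \ A' := by
        constructor
        · exact Or.inr rfl
        · intro h
          rcases h with ⟨v, _, h⟩ | h
          · exact Sum.inl_ne_inr h
          · exact habne (Sum.inr_injective h).symm
      have hform : FormPattern (u.length + 2) A' B' σ := by
        by_cases hip : i % 2 = 0
        · have hxa : (Sum.inr x' : V ⊕ Fin (2*k+2)) = Sum.inr a' := by rw [ha']; simp [hip]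
          have hyb : (Sum.inr y' : V ⊕ Fin (2*k+2)) = Sum.inr b' := by rw [hb']; simp [hip]
          rw [hxa, hyb] at hsub
          exact FormPattern_insert2 hi hsub hualt
            ⟨fun _ => hxin, fun h => absurd h (by omega)⟩
            ⟨fun h => absurd h (by omega), fun _ => hyin⟩
        · have hip1 : i % 2 = 1 := by omega
          have hxa : (Sum.inr x' : V ⊕ Fin (2*k+2)) = Sum.inr b' := by rw [hb']; simp [hip]
          have hyb : (Sum.inr y' : V ⊕ Fin (2*k+2)) = Sum.inr a' := by rw [ha']; simp [hip]
          rw [hxa, hyb] at hsub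
          exact FormPattern_insert2 hi hsub hualt
            ⟨fun h => absurd h (by omega), fun _ => hyin⟩
            ⟨fun _ => hxin, fun h => absurd h (by omega)⟩
      rw [hulen] at hform
      exact hfree A' hA'mem B' hB'mem hform
end
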